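/- Work in the Bratteli diagram of the Weyl group B_n: vertices at level j are ordered pairs of Young diagrams of total size j, with covering relation given by adding one cell to one component. For 2 ≤ i ≤ n define S(n, i) to be the sum, over all tuples (β_{n-1}, β_{i-1}, β_{i-2}, α_i, α_{i-1}) of pairs of Young diagrams at levels n−1, i−1, i−2, i, i−1 respectively satisfying β_{i-2} ⋖ β_{i-1}, β_{i-1} ⋖ α_i, β_{i-2} ⋖ α_{i-1}, and α_{i-1} ⋖ α_i, of N(β_{i-1}, β_{n-1}) · d(α_{i-1}) · d(β_{n-1}). Then 2^{i-1} · (i−1)! · S(n, i) = 2^{n-1} · (n−1)! · S(i, i); that is, S(n, i) = (|B_{n-1}| / |B_{i-1}|) · S(i, i). -/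

import Mathlib

open Finset

/-- Ordered pairs of Young diagrams: the vertices of the Bratteli diagram of the Weyl
groups `B_n`. -/
abbrev YP := YoungDiagram × YoungDiagram

/-- `ν` covers `μ`: `ν` is obtained from the Young diagram `μ` by adding exactly one cell. -/
def YDCov (μ ν : YoungDiagram) : Prop := μ ≤ ν ∧ ν.card = μ.card + 1

namespace YoungDiagram

/-- A cell can be added at the end of row `i`. -/
def Addable (μ : YoungDiagram) (i : ℕ) : Prop := ∀ i' < i, μ.rowLen i < μ.rowLen i'

/-- The last cell of row `i` can be removed. -/
def Removable (μ : YoungDiagram) (i : ℕ) : Prop := μ.rowLen (i + 1) < μ.rowLen i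

lemma addable_succ_iff {μ : YoungDiagram} {i : ℕ} :
    μ.Addable (i + 1) ↔ μ.Removable i := by
  constructor
  · intro h; exact h i (Nat.lt_succ_self i)
  · intro h i' hi'
    exact lt_of_lt_of_le h (μ.rowLen_anti i' i (Nat.lt_succ_iff.mp hi'))

lemma addable_zero (μ : YoungDiagram) : μ.Addable 0 := fun i' hi' => absurd hi' (Nat.not_lt_zero i')

private lemma addable_lowerSet {μ : YoungDiagram} {i : ℕ} (h : μ.Addable i) :
    IsLowerSet (↑(insert (i, μ.rowLen i) μ.cells) : Set (ℕ × ℕ)) := by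
  intro p q hle hmem
  obtain ⟨c, d⟩ := p
  obtain ⟨a, b⟩ := q
  obtain ⟨hac, hbd⟩ : a ≤ c ∧ b ≤ d := hle
  simp only [Finset.coe_insert, Set.mem_insert_iff, Finset.mem_coe, mem_cells] at hmem ⊢
  rcases hmem with heq | hmem
  · obtain ⟨hc, hd⟩ : c = i ∧ d = μ.rowLen i := Prod.ext_iff.mp heq
    subst hc; subst hd
    rcases lt_or_eq_of_le hac with hlt | hEq
    · right
      exact mem_iff_lt_rowLen.mpr (lt_of_le_of_lt hbd (h a hlt))
    · subst hEq
      rcases lt_or_eq_of_le hbd with hlt | hEq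
      · right; exact mem_iff_lt_rowLen.mpr hlt
      · left; rw [hEq]
  · right; exact μ.up_left_mem hac hbd hmem

open Classical in
/-- Add a cell at the end of row `i` (if possible; otherwise return `μ`). -/
noncomputable def addCell (μ : YoungDiagram) (i : ℕ) : YoungDiagram :=
  if h : μ.Addable i then ⟨insert (i, μ.rowLen i) μ.cells, addable_lowerSet h⟩ else μ

lemma addCell_cells {μ : YoungDiagram} {i : ℕ} (h : μ.Addable i) :
    (μ.addCell i).cells = insert (i, μ.rowLen i) μ.cells := by
  rw [addCell, dif_pos h]

lemma not_mem_self {μ : YoungDiagram} (i : ℕ) : (i, μ.rowLen i) ∉ μ := by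
  simp [mem_iff_lt_rowLen]

lemma YDCov_addCell {μ : YoungDiagram} {i : ℕ} (h : μ.Addable i) : YDCov μ (μ.addCell i) := by
  constructor
  · rw [← cells_subset_iff, addCell_cells h]
    exact Finset.subset_insert _ _
  · show (μ.addCell i).cells.card = μ.cells.card + 1
    rw [addCell_cells h, Finset.card_insert_of_notMem (by simpa using not_mem_self (μ := μ) i)]

lemma YDCov_iff_addCell {μ ν : YoungDiagram} :
    YDCov μ ν ↔ ∃ i, μ.Addable i ∧ ν = μ.addCell i := by
  constructor
  · rintro ⟨hle, hcard⟩
    have hsub : μ.cells ⊆ ν.cells := hle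
    have hcard' : ν.cells.card = μ.cells.card + 1 := hcard
    have hdiff : (ν.cells \ μ.cells).card = 1 := by
      rw [Finset.card_sdiff_of_subset hsub]; omega
    obtain ⟨x, hx⟩ := Finset.card_eq_one.mp hdiff
    obtain ⟨i, j⟩ := x
    have hxm : (i, j) ∈ ν.cells ∧ (i, j) ∉ μ.cells := by
      have := hx ▸ Finset.mem_singleton_self (i, j)
      simpa [Finset.mem_sdiff] using this
    have hcells : ν.cells = insert (i, j) μ.cells := by
      apply Finset.Subset.antisymm
      · intro y hy
        by_cases hym : y ∈ μ.cells
        · exact Finset.mem_insert_of_mem hym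
        · have : y ∈ ν.cells \ μ.cells := Finset.mem_sdiff.mpr ⟨hy, hym⟩
          rw [hx, Finset.mem_singleton] at this
          exact this ▸ Finset.mem_insert_self _ _
      · rw [Finset.insert_subset_iff]; exact ⟨hxm.1, hsub⟩
    -- j = μ.rowLen i
    have hj : j = μ.rowLen i := by
      have h1 : μ.rowLen i ≤ j := by
        by_contra hc
        exact hxm.2 (mem_iff_lt_rowLen.mpr (by omega))
      rcases eq_or_lt_of_le h1 with hEq | hlt
      · omega
      · exfalso
        have : (i, μ.rowLen i) ∈ ν := ν.up_left_mem (le_refl i) (le_of_lt hlt) hxm.1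
        have : (i, μ.rowLen i) ∈ insert (i, j) μ.cells := hcells ▸ this
        rcases Finset.mem_insert.mp this with hh | hh
        · have := (Prod.ext_iff.mp hh).2; omega
        · exact not_mem_self i hh
    subst hj
    have hadd : μ.Addable i := by
      intro i' hi'
      have h1 : (i', μ.rowLen i) ∈ ν := ν.up_left_mem (le_of_lt hi') (le_refl _) hxm.1
      have h2 : (i', μ.rowLen i) ∈ insert (i, μ.rowLen i) μ.cells := hcells ▸ h1
      rcases Finset.mem_insert.mp h2 with hh | hh
      · exfalso; have := (Prod.ext_iff.mp hh).1; omega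
      · exact mem_iff_lt_rowLen.mp hh
    refine ⟨i, hadd, ?_⟩
    apply YoungDiagram.ext
    rw [addCell_cells hadd, hcells]
  · rintro ⟨i, h, rfl⟩
    exact YDCov_addCell h

lemma addCell_injOn {μ : YoungDiagram} {i i' : ℕ} (h : μ.Addable i) (h' : μ.Addable i')
    (heq : μ.addCell i = μ.addCell i') : i = i' := by
  by_contra hne
  have h1 : (i, μ.rowLen i) ∈ (μ.addCell i).cells := by
    rw [addCell_cells h]; exact Finset.mem_insert_self _ _
  rw [heq, addCell_cells h'] at h1
  rcases Finset.mem_insert.mp h1 with hh | hh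
  · exact hne (Prod.ext_iff.mp hh).1
  · exact not_mem_self i hh

private lemma removable_lowerSet {μ : YoungDiagram} {i : ℕ} (h : μ.Removable i) :
    IsLowerSet (↑(μ.cells.erase (i, μ.rowLen i - 1)) : Set (ℕ × ℕ)) := by
  have hpos : 0 < μ.rowLen i := lt_of_le_of_lt (Nat.zero_le _) h
  intro p q hle hmem
  obtain ⟨c, d⟩ := p
  obtain ⟨a, b⟩ := q
  obtain ⟨hac, hbd⟩ : a ≤ c ∧ b ≤ d := hle
  simp only [Finset.coe_erase, Set.mem_diff, Finset.mem_coe, mem_cells, Set.mem_singleton_iff]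
    at hmem ⊢
  obtain ⟨hcd, hcdne⟩ := hmem
  refine ⟨μ.up_left_mem hac hbd hcd, ?_⟩
  rintro heq
  obtain ⟨ha, hb⟩ : a = i ∧ b = μ.rowLen i - 1 := Prod.ext_iff.mp heq
  subst ha; subst hb
  -- (c, d) ∈ μ, i ≤ c, rowLen i - 1 ≤ d
  have hd : d < μ.rowLen c := mem_iff_lt_rowLen.mp hcd
  rcases eq_or_lt_of_le hac with hEq | hlt
  · subst hEq
    apply hcdne
    have hdd : d = μ.rowLen a - 1 := by omega
    rw [hdd]
  · have : μ.rowLen c ≤ μ.rowLen (a + 1) := μ.rowLen_anti _ _ hlt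
    unfold Removable at h
    omega

open Classical in
/-- Remove the last cell of row `i` (if possible; otherwise return `μ`). -/
noncomputable def delCell (μ : YoungDiagram) (i : ℕ) : YoungDiagram :=
  if h : μ.Removable i then ⟨μ.cells.erase (i, μ.rowLen i - 1), removable_lowerSet h⟩ else μ

lemma delCell_cells {μ : YoungDiagram} {i : ℕ} (h : μ.Removable i) :
    (μ.delCell i).cells = μ.cells.erase (i, μ.rowLen i - 1) := by
  rw [delCell, dif_pos h]

lemma corner_mem {μ : YoungDiagram} {i : ℕ} (h : μ.Removable i) : (i, μ.rowLen i - 1) ∈ μ := by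
  have hpos : 0 < μ.rowLen i := lt_of_le_of_lt (Nat.zero_le _) h
  exact mem_iff_lt_rowLen.mpr (by omega)

lemma YDCov_delCell {μ : YoungDiagram} {i : ℕ} (h : μ.Removable i) : YDCov (μ.delCell i) μ := by
  constructor
  · rw [← cells_subset_iff, delCell_cells h]
    exact Finset.erase_subset _ _
  · show μ.cells.card = (μ.delCell i).cells.card + 1
    rw [delCell_cells h, Finset.card_erase_of_mem (corner_mem h)]
    have h1 : (i, μ.rowLen i - 1) ∈ μ.cells := corner_mem h
    have h2 : 0 < μ.cells.card := Finset.card_pos.mpr ⟨_, h1⟩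
    omega

lemma YDCov_iff_delCell {μ ρ : YoungDiagram} :
    YDCov ρ μ ↔ ∃ i, μ.Removable i ∧ ρ = μ.delCell i := by
  constructor
  · rintro ⟨hle, hcard⟩
    have hsub : ρ.cells ⊆ μ.cells := hle
    have hcard' : μ.cells.card = ρ.cells.card + 1 := hcard
    have hdiff : (μ.cells \ ρ.cells).card = 1 := by
      rw [Finset.card_sdiff_of_subset hsub]; omega
    obtain ⟨x, hx⟩ := Finset.card_eq_one.mp hdiff
    obtain ⟨i, j⟩ := x
    have hxm : (i, j) ∈ μ.cells ∧ (i, j) ∉ ρ.cells := by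
      have := hx ▸ Finset.mem_singleton_self (i, j)
      simpa [Finset.mem_sdiff] using this
    have hcells : ρ.cells = μ.cells.erase (i, j) := by
      apply Finset.Subset.antisymm
      · intro y hy
        refine Finset.mem_erase.mpr ⟨?_, hsub hy⟩
        rintro rfl; exact hxm.2 hy
      · intro y hy
        obtain ⟨hyne, hym⟩ := Finset.mem_erase.mp hy
        by_contra hyc
        have : y ∈ μ.cells \ ρ.cells := Finset.mem_sdiff.mpr ⟨hym, hyc⟩
        rw [hx, Finset.mem_singleton] at this
        exact hyne this
    have hnotρ : ∀ c ∈ μ, c ≠ (i, j) → c ∈ ρ := by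
      intro c hc hcne
      rw [← mem_cells, hcells]
      exact Finset.mem_erase.mpr ⟨hcne, hc⟩
    -- j + 1 = μ.rowLen i
    have hj : j + 1 = μ.rowLen i := by
      have h1 : j < μ.rowLen i := mem_iff_lt_rowLen.mp hxm.1
      rcases eq_or_lt_of_le (Nat.succ_le_of_lt h1) with hEq | hlt
      · exact hEq
      · exfalso
        have hmem : (i, j + 1) ∈ μ := mem_iff_lt_rowLen.mpr hlt
        have : (i, j + 1) ∈ ρ := hnotρ _ hmem (by simp)
        have : (i, j) ∈ ρ := ρ.up_left_mem (le_refl i) (Nat.le_succ j) this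
        exact hxm.2 this
    have hrem : μ.Removable i := by
      unfold Removable
      have : μ.rowLen (i + 1) ≤ j := by
        by_contra hc
        have hmem : (i + 1, j) ∈ μ := mem_iff_lt_rowLen.mpr (by omega)
        have : (i + 1, j) ∈ ρ := hnotρ _ hmem (by simp)
        have : (i, j) ∈ ρ := ρ.up_left_mem (Nat.le_succ i) (le_refl j) this
        exact hxm.2 this
      omega
    refine ⟨i, hrem, ?_⟩
    apply YoungDiagram.ext
    rw [delCell_cells hrem, hcells]
    have : μ.rowLen i - 1 = j := by omega
    rw [this]
  · rintro ⟨i, h, rfl⟩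
    exact YDCov_delCell h

lemma delCell_injOn {μ : YoungDiagram} {i i' : ℕ} (h : μ.Removable i) (h' : μ.Removable i')
    (heq : μ.delCell i = μ.delCell i') : i = i' := by
  by_contra hne
  have h1 : (i, μ.rowLen i - 1) ∉ (μ.delCell i).cells := by
    rw [delCell_cells h]; simp
  rw [heq, delCell_cells h'] at h1
  apply h1
  refine Finset.mem_erase.mpr ⟨?_, corner_mem h⟩
  intro hcontra
  exact hne (Prod.ext_iff.mp hcontra).1

end YoungDiagram

namespace YoungDiagram

lemma addable_subset {μ : YoungDiagram} : {i | μ.Addable i} ⊆ Set.Iic (μ.colLen 0) := by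
  intro i hi
  simp only [Set.mem_Iic]
  by_contra hc
  push_neg at hc
  have h0 : μ.rowLen (μ.colLen 0) = 0 := by
    by_contra h0
    have : (μ.colLen 0, 0) ∈ μ := mem_iff_lt_rowLen.mpr (Nat.pos_of_ne_zero h0)
    have := mem_iff_lt_colLen.mp this
    omega
  have := hi (μ.colLen 0) hc
  omega

lemma removable_subset {μ : YoungDiagram} : {i | μ.Removable i} ⊆ Set.Iio (μ.colLen 0) := by
  intro i hi
  have hpos : 0 < μ.rowLen i := lt_of_le_of_lt (Nat.zero_le _) hi
  have : (i, 0) ∈ μ := mem_iff_lt_rowLen.mpr hpos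
  exact mem_iff_lt_colLen.mp this

lemma addable_finite (μ : YoungDiagram) : {i | μ.Addable i}.Finite :=
  (Set.finite_Iic _).subset addable_subset

lemma removable_finite (μ : YoungDiagram) : {i | μ.Removable i}.Finite :=
  (Set.finite_Iio _).subset removable_subset

lemma upSet_eq (μ : YoungDiagram) : {ν | YDCov μ ν} = μ.addCell '' {i | μ.Addable i} := by
  ext ν
  simp only [Set.mem_setOf_eq, Set.mem_image]
  rw [YDCov_iff_addCell]
  constructor
  · rintro ⟨i, h, rfl⟩; exact ⟨i, h, rfl⟩
  · rintro ⟨i, h, rfl⟩; exact ⟨i, h, rfl⟩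

lemma downSet_eq (μ : YoungDiagram) : {ρ | YDCov ρ μ} = μ.delCell '' {i | μ.Removable i} := by
  ext ρ
  simp only [Set.mem_setOf_eq, Set.mem_image]
  rw [YDCov_iff_delCell]
  constructor
  · rintro ⟨i, h, rfl⟩; exact ⟨i, h, rfl⟩
  · rintro ⟨i, h, rfl⟩; exact ⟨i, h, rfl⟩

lemma upSet_finite (μ : YoungDiagram) : {ν | YDCov μ ν}.Finite := by
  rw [upSet_eq]; exact (addable_finite μ).image _

lemma downSet_finite (μ : YoungDiagram) : {ρ | YDCov ρ μ}.Finite := by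
  rw [downSet_eq]; exact (removable_finite μ).image _

lemma ncard_upSet (μ : YoungDiagram) :
    {ν | YDCov μ ν}.ncard = {ρ | YDCov ρ μ}.ncard + 1 := by
  rw [upSet_eq, downSet_eq]
  have e1 : (μ.addCell '' {i | μ.Addable i}).ncard = {i | μ.Addable i}.ncard :=
    Set.ncard_image_of_injOn (fun i hi j hj hij => addCell_injOn hi hj hij)
  have e2 : (μ.delCell '' {i | μ.Removable i}).ncard = {i | μ.Removable i}.ncard :=
    Set.ncard_image_of_injOn (fun i hi j hj hij => delCell_injOn hi hj hij)
  rw [e1, e2]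
  have hA : {i | μ.Addable i} = insert 0 (Nat.succ '' {i | μ.Removable i}) := by
    ext i
    simp only [Set.mem_setOf_eq, Set.mem_insert_iff, Set.mem_image]
    constructor
    · intro h
      rcases Nat.eq_zero_or_pos i with rfl | hpos
      · exact Or.inl rfl
      · right
        obtain ⟨i', rfl⟩ := Nat.exists_eq_succ_of_ne_zero (Nat.pos_iff_ne_zero.mp hpos)
        exact ⟨i', addable_succ_iff.mp h, rfl⟩
    · rintro (rfl | ⟨i', h, rfl⟩)
      · exact addable_zero μ
      · exact addable_succ_iff.mpr h
  rw [hA, Set.ncard_insert_of_notMem (by simp) (((removable_finite μ).image _))]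
  rw [Set.ncard_image_of_injective _ Nat.succ_injective]

end YoungDiagram

/-- The covering relation on ordered pairs of Young diagrams: one component is covered and
the other is unchanged. -/
def PairCov (α β : YP) : Prop :=
  (YDCov α.1 β.1 ∧ α.2 = β.2) ∨ (α.1 = β.1 ∧ YDCov α.2 β.2)

/-- The level of a pair of Young diagrams: the total number of cells. -/
def lvl (β : YP) : ℕ := β.1.card + β.2.card

lemma YD_eq_of_le_of_card_le {μ ν : YoungDiagram} (hle : μ ≤ ν) (hc : ν.card ≤ μ.card) :
    μ = ν :=
  YoungDiagram.ext (Finset.eq_of_subset_of_card_le hle hc)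

lemma YD_card_le_of_le {μ ν : YoungDiagram} (hle : μ ≤ ν) : μ.card ≤ ν.card :=
  Finset.card_le_card hle

lemma PairCov.le {α β : YP} (h : PairCov α β) : α ≤ β := by
  rcases h with ⟨h1, h2⟩ | ⟨h1, h2⟩
  · exact ⟨h1.1, le_of_eq h2⟩
  · exact ⟨le_of_eq h1, h2.1⟩

lemma PairCov.lvl_eq {α β : YP} (h : PairCov α β) : lvl β = lvl α + 1 := by
  rcases h with ⟨h1, h2⟩ | ⟨h1, h2⟩
  · unfold lvl; rw [h1.2, h2]; ring
  · unfold lvl; rw [h2.2, h1]; ring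

lemma pair_eq_of_le_of_lvl_le {α β : YP} (hle : α ≤ β) (hl : lvl β ≤ lvl α) : α = β := by
  obtain ⟨h1, h2⟩ := hle
  have c1 : α.1.card ≤ β.1.card := YD_card_le_of_le h1
  have c2 : α.2.card ≤ β.2.card := YD_card_le_of_le h2
  unfold lvl at hl
  have e1 : β.1.card ≤ α.1.card := by omega
  have e2 : β.2.card ≤ α.2.card := by omega
  exact Prod.ext (YD_eq_of_le_of_card_le h1 e1) (YD_eq_of_le_of_card_le h2 e2)

lemma lvl_mono {α β : YP} (hle : α ≤ β) : lvl α ≤ lvl β :=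
  Nat.add_le_add (YD_card_le_of_le hle.1) (YD_card_le_of_le hle.2)

lemma PairCov_iff {α β : YP} : PairCov α β ↔ α ≤ β ∧ lvl β = lvl α + 1 := by
  constructor
  · intro h; exact ⟨h.le, h.lvl_eq⟩
  · rintro ⟨⟨h1, h2⟩, hl⟩
    have c1 : α.1.card ≤ β.1.card := YD_card_le_of_le h1
    have c2 : α.2.card ≤ β.2.card := YD_card_le_of_le h2
    unfold lvl at hl
    rcases Nat.lt_or_ge α.1.card β.1.card with hlt | hge
    · left
      have hc2 : β.2.card ≤ α.2.card := by omega
      exact ⟨⟨h1, by omega⟩, YD_eq_of_le_of_card_le h2 hc2⟩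
    · right
      have hc1 : β.1.card ≤ α.1.card := hge
      exact ⟨YD_eq_of_le_of_card_le h1 hc1, ⟨h2, by omega⟩⟩

lemma YD_card_le_finite (k : ℕ) : {μ : YoungDiagram | μ.card ≤ k}.Finite := by
  apply Set.Finite.of_finite_image (f := YoungDiagram.cells)
  · apply Set.Finite.subset (Finset.finite_toSet ((Finset.range k ×ˢ Finset.range k).powerset))
    rintro s ⟨μ, hμ, rfl⟩
    simp only [Finset.coe_powerset, Set.mem_preimage, Set.mem_powerset_iff,
      Finset.mem_coe, Finset.coe_subset]
    intro c hc
    obtain ⟨a, b⟩ := c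
    have hcm : (a, b) ∈ μ := hc
    have hb : b < μ.rowLen 0 := lt_of_lt_of_le (YoungDiagram.mem_iff_lt_rowLen.mp hcm)
      (μ.rowLen_anti 0 a (Nat.zero_le a))
    have ha : a < μ.colLen 0 := lt_of_lt_of_le (YoungDiagram.mem_iff_lt_colLen.mp hcm)
      (μ.colLen_anti 0 b (Nat.zero_le b))
    have hrow : μ.rowLen 0 ≤ μ.card := by
      rw [YoungDiagram.rowLen_eq_card]
      exact Finset.card_le_card (Finset.filter_subset _ _)
    have hcol : μ.colLen 0 ≤ μ.card := by
      rw [YoungDiagram.colLen_eq_card]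
      exact Finset.card_le_card (Finset.filter_subset _ _)
    have hμk := hμ
    simp only [Set.mem_setOf_eq] at hμk
    simp only [Finset.mem_product, Finset.mem_range]
    omega
  · intro μ _ ν _ h
    exact YoungDiagram.ext h

lemma lvl_finite (m : ℕ) : {β : YP | lvl β = m}.Finite := by
  apply Set.Finite.subset (Set.Finite.prod (YD_card_le_finite m) (YD_card_le_finite m))
  intro β h
  have h' : β.1.card + β.2.card = m := h
  exact ⟨show β.1.card ≤ m by omega, show β.2.card ≤ m by omega⟩

lemma pair_down_finite (β : YP) : {δ : YP | PairCov δ β}.Finite := by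
  apply Set.Finite.subset (lvl_finite (lvl β - 1))
  intro δ h
  have := PairCov.lvl_eq h
  show lvl δ = lvl β - 1
  omega

lemma pair_up_finite (β : YP) : {γ : YP | PairCov β γ}.Finite := by
  apply Set.Finite.subset (lvl_finite (lvl β + 1))
  intro γ h
  exact PairCov.lvl_eq h

lemma YDCov_irrefl (μ : YoungDiagram) : ¬ YDCov μ μ := by
  rintro ⟨-, hc⟩; omega

/-- Each pair has two more upper covers than lower covers. -/
lemma ncard_pair_up (β : YP) :
    {γ : YP | PairCov β γ}.ncard = {δ : YP | PairCov δ β}.ncard + 2 := by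
  have hup : {γ : YP | PairCov β γ} =
      ((fun ν => (ν, β.2)) '' {ν | YDCov β.1 ν}) ∪ ((fun ν => (β.1, ν)) '' {ν | YDCov β.2 ν}) := by
    ext γ
    simp only [Set.mem_setOf_eq, Set.mem_union, Set.mem_image, PairCov]
    constructor
    · rintro (⟨h1, h2⟩ | ⟨h1, h2⟩)
      · exact Or.inl ⟨γ.1, h1, Prod.ext_iff.mpr ⟨rfl, h2⟩⟩
      · exact Or.inr ⟨γ.2, h2, Prod.ext_iff.mpr ⟨h1, rfl⟩⟩
    · rintro (⟨ν, h, rfl⟩ | ⟨ν, h, rfl⟩)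
      · exact Or.inl ⟨h, rfl⟩
      · exact Or.inr ⟨rfl, h⟩
  have hdown : {δ : YP | PairCov δ β} =
      ((fun ν => (ν, β.2)) '' {ν | YDCov ν β.1}) ∪ ((fun ν => (β.1, ν)) '' {ν | YDCov ν β.2}) := by
    ext δ
    simp only [Set.mem_setOf_eq, Set.mem_union, Set.mem_image, PairCov]
    constructor
    · rintro (⟨h1, h2⟩ | ⟨h1, h2⟩)
      · exact Or.inl ⟨δ.1, h1, Prod.ext_iff.mpr ⟨rfl, h2.symm⟩⟩
      · exact Or.inr ⟨δ.2, h2, Prod.ext_iff.mpr ⟨h1.symm, rfl⟩⟩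
    · rintro (⟨ν, h, rfl⟩ | ⟨ν, h, rfl⟩)
      · exact Or.inl ⟨h, rfl⟩
      · exact Or.inr ⟨rfl, h⟩
  have hinj1 : Function.Injective (fun ν : YoungDiagram => (ν, β.2)) := by
    intro a b h; exact (Prod.ext_iff.mp h).1
  have hinj2 : Function.Injective (fun ν : YoungDiagram => (β.1, ν)) := by
    intro a b h; exact (Prod.ext_iff.mp h).2
  rw [hup, hdown]
  rw [Set.ncard_union_eq ?dj1 (((β.1).upSet_finite).image _) (((β.2).upSet_finite).image _)]
  case dj1 =>
    rw [Set.disjoint_left]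
    rintro γ ⟨ν, h, rfl⟩ ⟨ν', h', heq⟩
    have : ν = β.1 := (Prod.ext_iff.mp heq).1.symm
    exact YDCov_irrefl β.1 (this ▸ h)
  rw [Set.ncard_union_eq ?dj2 (((β.1).downSet_finite).image _) (((β.2).downSet_finite).image _)]
  case dj2 =>
    rw [Set.disjoint_left]
    rintro δ ⟨ν, h, rfl⟩ ⟨ν', h', heq⟩
    have : ν = β.1 := (Prod.ext_iff.mp heq).1.symm
    exact YDCov_irrefl β.1 (this ▸ h)
  rw [Set.ncard_image_of_injective _ hinj1, Set.ncard_image_of_injective _ hinj2,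
    Set.ncard_image_of_injective _ hinj1, Set.ncard_image_of_injective _ hinj2]
  rw [YoungDiagram.ncard_upSet, YoungDiagram.ncard_upSet]
  ring

lemma lvl_sup_add_lvl_inf (β β' : YP) : lvl (β ⊔ β') + lvl (β ⊓ β') = lvl β + lvl β' := by
  unfold lvl
  have h1 : (β.1.cells ∪ β'.1.cells).card + (β.1.cells ∩ β'.1.cells).card
      = β.1.cells.card + β'.1.cells.card := Finset.card_union_add_card_inter _ _
  have h2 : (β.2.cells ∪ β'.2.cells).card + (β.2.cells ∩ β'.2.cells).card
      = β.2.cells.card + β'.2.cells.card := Finset.card_union_add_card_inter _ _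
  have e1 : (β ⊔ β').1 = β.1 ⊔ β'.1 := rfl
  have e2 : (β ⊔ β').2 = β.2 ⊔ β'.2 := rfl
  have e3 : (β ⊓ β').1 = β.1 ⊓ β'.1 := rfl
  have e4 : (β ⊓ β').2 = β.2 ⊓ β'.2 := rfl
  rw [e1, e2, e3, e4]
  show (β.1 ⊔ β'.1).cells.card + (β.2 ⊔ β'.2).cells.card
    + ((β.1 ⊓ β'.1).cells.card + (β.2 ⊓ β'.2).cells.card) = _
  rw [YoungDiagram.cells_sup, YoungDiagram.cells_sup, YoungDiagram.cells_inf,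
    YoungDiagram.cells_inf]
  have g1 : β.1.card = β.1.cells.card := rfl
  have g2 : β.2.card = β.2.cells.card := rfl
  have g3 : β'.1.card = β'.1.cells.card := rfl
  have g4 : β'.2.card = β'.2.cells.card := rfl
  omega

/-- Two distinct pairs at the same level have equally many common upper covers
and common lower covers. -/
lemma ncard_pair_common (β β' : YP) (hne : β ≠ β') (hl : lvl β = lvl β') :
    {γ : YP | PairCov β γ ∧ PairCov β' γ}.ncard
      = {δ : YP | PairCov δ β ∧ PairCov δ β'}.ncard := by
  have hsup_ge : lvl β + 1 ≤ lvl (β ⊔ β') := by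
    by_contra hc
    push_neg at hc
    have h1 : β = β ⊔ β' := pair_eq_of_le_of_lvl_le le_sup_left (by omega)
    have h2 : β' = β ⊔ β' := pair_eq_of_le_of_lvl_le le_sup_right (by omega)
    exact hne (h1.trans h2.symm)
  have hsum := lvl_sup_add_lvl_inf β β'
  have hup : {γ : YP | PairCov β γ ∧ PairCov β' γ} =
      if lvl (β ⊔ β') = lvl β + 1 then {β ⊔ β'} else ∅ := by
    ext γ
    simp only [Set.mem_setOf_eq, PairCov_iff]
    split_ifs with hcond
    · simp only [Set.mem_singleton_iff]
      constructor
      · rintro ⟨⟨hle1, hlvl1⟩, ⟨hle2, _⟩⟩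
        exact (pair_eq_of_le_of_lvl_le (sup_le hle1 hle2) (by omega)).symm
      · rintro rfl
        exact ⟨⟨le_sup_left, hcond⟩, ⟨le_sup_right, by omega⟩⟩
    · simp only [Set.mem_empty_iff_false, iff_false]
      rintro ⟨⟨hle1, hlvl1⟩, ⟨hle2, _⟩⟩
      have := lvl_mono (sup_le hle1 hle2)
      omega
  have hdown : {δ : YP | PairCov δ β ∧ PairCov δ β'} =
      if lvl (β ⊔ β') = lvl β + 1 then {β ⊓ β'} else ∅ := by
    ext δ
    simp only [Set.mem_setOf_eq, PairCov_iff]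
    split_ifs with hcond
    · simp only [Set.mem_singleton_iff]
      constructor
      · rintro ⟨⟨hle1, hlvl1⟩, ⟨hle2, _⟩⟩
        have hle : δ ≤ β ⊓ β' := le_inf hle1 hle2
        exact pair_eq_of_le_of_lvl_le hle (by omega)
      · rintro rfl
        refine ⟨⟨inf_le_left, by omega⟩, ⟨inf_le_right, by omega⟩⟩
    · simp only [Set.mem_empty_iff_false, iff_false]
      rintro ⟨⟨hle1, hlvl1⟩, ⟨hle2, _⟩⟩
      have hge : lvl δ ≤ lvl (β ⊓ β') := lvl_mono (le_inf hle1 hle2)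
      omega
  rw [hup, hdown]
  split_ifs <;> simp

/-- The number of saturated chains of length `k` from `α` to `β` in the poset of pairs of
Young diagrams. -/
noncomputable def nchains (k : ℕ) (α β : YP) : ℕ :=
  {c : Fin (k + 1) → YP | c 0 = α ∧ c (Fin.last k) = β ∧
    ∀ j : Fin k, PairCov (c j.castSucc) (c j.succ)}.ncard

/-- `N α β`: the number of saturated chains from `α` up to `β`. -/
noncomputable def NN (α β : YP) : ℕ := nchains (lvl β - lvl α) α β

/-- `d β`: the number of saturated chains from the empty pair `(∅, ∅)` up to `β`
(the dimension of the irreducible representation of `B_{lvl β}` labelled by `β`). -/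
noncomputable def dd (β : YP) : ℕ := NN (⊥, ⊥) β

instance : DecidableEq YoungDiagram := fun μ ν =>
  decidable_of_iff (μ.cells = ν.cells) ⟨fun h => YoungDiagram.ext h, fun h => by rw [h]⟩

instance (μ ν : YoungDiagram) : Decidable (μ ≤ ν) :=
  decidable_of_iff (μ.cells ⊆ ν.cells) YoungDiagram.cells_subset_iff

instance (μ ν : YoungDiagram) : Decidable (YDCov μ ν) :=
  inferInstanceAs (Decidable (_ ∧ _))

instance (α β : YP) : Decidable (PairCov α β) :=
  inferInstanceAs (Decidable (_ ∨ _))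

/-- The finite set of pairs of Young diagrams at level `m`. -/
noncomputable def LF (m : ℕ) : Finset YP := (lvl_finite m).toFinset

@[simp] lemma mem_LF {m : ℕ} {β : YP} : β ∈ LF m ↔ lvl β = m := Set.Finite.mem_toFinset _

/-- The finite set of pairs covered by `β`. -/
noncomputable def DF (β : YP) : Finset YP := (pair_down_finite β).toFinset

@[simp] lemma mem_DF {δ β : YP} : δ ∈ DF β ↔ PairCov δ β := Set.Finite.mem_toFinset _

lemma nchains_zero (α β : YP) : nchains 0 α β = if α = β then 1 else 0 := by
  unfold nchains
  split_ifs with h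
  · subst h
    have : {c : Fin 1 → YP | c 0 = α ∧ c (Fin.last 0) = α ∧
        ∀ j : Fin 0, PairCov (c j.castSucc) (c j.succ)} = {fun _ => α} := by
      ext c
      simp only [Set.mem_setOf_eq, Set.mem_singleton_iff]
      constructor
      · rintro ⟨h0, -, -⟩
        funext j
        have : j = 0 := Subsingleton.elim j 0
        rw [this, h0]
      · rintro rfl
        exact ⟨rfl, rfl, fun j => j.elim0⟩
    rw [this, Set.ncard_singleton]
  · have : {c : Fin 1 → YP | c 0 = α ∧ c (Fin.last 0) = β ∧
        ∀ j : Fin 0, PairCov (c j.castSucc) (c j.succ)} = ∅ := by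
      ext c
      simp only [Set.mem_setOf_eq, Set.mem_empty_iff_false, iff_false]
      rintro ⟨h0, h1, -⟩
      have : Fin.last 0 = 0 := rfl
      rw [this, h0] at h1
      exact h h1
    rw [this, Set.ncard_empty]

/-- The set of chains of combinatorial data defining `nchains`. -/
def chainSet (k : ℕ) (α β : YP) : Set (Fin (k + 1) → YP) :=
  {c | c 0 = α ∧ c (Fin.last k) = β ∧ ∀ j : Fin k, PairCov (c j.castSucc) (c j.succ)}

lemma nchains_eq (k : ℕ) (α β : YP) : nchains k α β = (chainSet k α β).ncard := rfl

lemma chainSet_lvl' {k : ℕ} {α β : YP} {c : Fin (k + 1) → YP} (hc : c ∈ chainSet k α β) :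
    ∀ (t : ℕ) (ht : t < k + 1), lvl (c ⟨t, ht⟩) = lvl α + t := by
  obtain ⟨h0, -, hstep⟩ := hc
  intro t
  induction t with
  | zero => intro ht; simpa using congrArg lvl h0
  | succ s ih =>
    intro ht
    have hs : s < k := by omega
    have hstep' := (hstep ⟨s, hs⟩).lvl_eq
    have e1 : (⟨s, hs⟩ : Fin k).castSucc = (⟨s, by omega⟩ : Fin (k + 1)) := rfl
    have e2 : (⟨s, hs⟩ : Fin k).succ = (⟨s + 1, by omega⟩ : Fin (k + 1)) := rfl
    rw [e1, e2] at hstep'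
    rw [hstep', ih (by omega)]
    omega

lemma chainSet_lvl {k : ℕ} {α β : YP} {c : Fin (k + 1) → YP} (hc : c ∈ chainSet k α β) :
    ∀ t : Fin (k + 1), lvl (c t) = lvl α + t.val := by
  intro t
  have := chainSet_lvl' hc t.val t.isLt
  simpa [Fin.eta] using this

lemma chainSet_finite (k : ℕ) (α β : YP) : (chainSet k α β).Finite := by
  apply Set.Finite.subset (Set.Finite.pi (fun j : Fin (k + 1) =>
    lvl_finite (lvl α + j.val)))
  intro c hc
  rw [Set.mem_pi]
  intro j _
  exact chainSet_lvl hc j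

lemma chainSet_succ (k : ℕ) (α β : YP) :
    chainSet (k + 1) α β =
      (fun d : Fin (k + 1) → YP => Fin.snoc d β) ''
        (⋃ γ ∈ (DF β : Set YP), chainSet k α γ) := by
  ext c
  constructor
  · rintro ⟨h0, hlast, hstep⟩
    refine ⟨Fin.init c, ?_, ?_⟩
    · rw [Set.mem_iUnion]
      refine ⟨Fin.init c (Fin.last k), ?_⟩
      rw [Set.mem_iUnion]
      have hγ : PairCov (Fin.init c (Fin.last k)) β := by
        have := hstep (Fin.last k)
        rw [Fin.succ_last, hlast] at this
        exact this
      refine ⟨by simpa using hγ, ?_, rfl, fun j => ?_⟩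
      · show Fin.init c 0 = α
        rw [Fin.init]
        simpa using h0
      · show PairCov (Fin.init c j.castSucc) (Fin.init c j.succ)
        rw [Fin.init, Fin.init]
        have e : (j.succ).castSucc = (j.castSucc).succ := by
          apply Fin.ext; simp
        rw [e]
        exact hstep j.castSucc
    · rw [← hlast]
      exact Fin.snoc_init_self c
  · rintro ⟨d, hd, rfl⟩
    rw [Set.mem_iUnion] at hd
    obtain ⟨γ, hd⟩ := hd
    rw [Set.mem_iUnion] at hd
    obtain ⟨hγ, h0, hlast, hstep⟩ := hd
    have hγ' : PairCov γ β := by simpa using hγ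
    refine ⟨?_, ?_, ?_⟩
    · show (Fin.snoc d β : Fin (k + 2) → YP) 0 = α
      have e0 : (0 : Fin (k + 2)) = (0 : Fin (k + 1)).castSucc := rfl
      rw [e0, Fin.snoc_castSucc]
      exact h0
    · exact Fin.snoc_last _ _
    · intro j
      show PairCov ((Fin.snoc d β : Fin (k + 2) → YP) j.castSucc)
        ((Fin.snoc d β : Fin (k + 2) → YP) j.succ)
      induction j using Fin.lastCases with
      | last =>
        rw [Fin.succ_last, Fin.snoc_last, Fin.snoc_castSucc, hlast]
        exact hγ'
      | cast i =>
        have e : (i.castSucc).succ = (i.succ).castSucc := by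
          apply Fin.ext; simp
        rw [e, Fin.snoc_castSucc, Fin.snoc_castSucc]
        exact hstep i

lemma snoc_injective (k : ℕ) (β : YP) :
    Function.Injective (fun d : Fin (k + 1) → YP => (Fin.snoc d β : Fin (k + 2) → YP)) := by
  intro a b h
  have := congrArg Fin.init h
  simpa [Fin.init_snoc] using this

lemma nchains_succ (k : ℕ) (α β : YP) :
    nchains (k + 1) α β = ∑ γ ∈ DF β, nchains k α γ := by
  rw [nchains_eq, chainSet_succ]
  rw [Set.ncard_image_of_injective _ (snoc_injective k β)]
  have hfin : (⋃ γ ∈ (DF β : Set YP), chainSet k α γ).Finite :=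
    Set.Finite.biUnion (DF β).finite_toSet (fun γ _ => chainSet_finite k α γ)
  rw [Set.ncard_eq_toFinset_card _ hfin]
  have hset : hfin.toFinset = (DF β).biUnion (fun γ => (chainSet_finite k α γ).toFinset) := by
    ext c
    simp [Set.Finite.mem_toFinset]
  rw [hset, Finset.card_biUnion]
  · apply Finset.sum_congr rfl
    intro γ _
    rw [nchains_eq, Set.ncard_eq_toFinset_card _ (chainSet_finite k α γ)]
  · intro γ _ γ' _ hne
    rw [Function.onFun, Finset.disjoint_left]
    intro c hc hc'
    rw [Set.Finite.mem_toFinset] at hc hc'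
    exact hne (hc.2.1.symm.trans hc'.2.1)

lemma lvl_bot : lvl ((⊥, ⊥) : YP) = 0 := by
  show (⊥ : YoungDiagram).cells.card + (⊥ : YoungDiagram).cells.card = 0
  rw [YoungDiagram.cells_bot]
  simp

lemma dd_eq_nchains (β : YP) : dd β = nchains (lvl β) (⊥, ⊥) β := by
  unfold dd NN
  rw [lvl_bot, Nat.sub_zero]

lemma DF_eq_filter {γ : YP} {m : ℕ} (h : lvl γ = m + 1) :
    DF γ = (LF m).filter (fun δ => PairCov δ γ) := by
  ext δ
  simp only [mem_DF, Finset.mem_filter, mem_LF]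
  constructor
  · intro hc
    have := hc.lvl_eq
    exact ⟨by omega, hc⟩
  · exact fun h => h.2

lemma dd_rec {γ : YP} {m : ℕ} (h : lvl γ = m + 1) :
    dd γ = ∑ δ ∈ LF m, if PairCov δ γ then dd δ else 0 := by
  rw [dd_eq_nchains, h, nchains_succ]
  rw [DF_eq_filter h, Finset.sum_filter]
  apply Finset.sum_congr rfl
  intro δ hδ
  rw [mem_LF] at hδ
  split_ifs with hc
  · rw [dd_eq_nchains, hδ]
  · rfl

lemma ncard_eq_filter_card {F : Finset YP} {p : YP → Prop} [DecidablePred p]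
    (h : ∀ x, p x → x ∈ F) : {x | p x}.ncard = (F.filter p).card := by
  rw [← Set.ncard_coe_finset]
  congr 1
  ext x
  simp only [Finset.coe_filter, Set.mem_setOf_eq]
  exact ⟨fun hx => ⟨h x hx, hx⟩, fun hx => hx.2⟩

/-- Key lemma (differential poset property): summing `d` over the covers of `β` at level
`m + 1` gives `2 (m + 1) d β`. -/
lemma key_sum : ∀ m : ℕ, ∀ β : YP, lvl β = m →
    ∑ γ ∈ LF (m + 1), (if PairCov β γ then dd γ else 0) = 2 * (m + 1) * dd β := by
  intro m
  induction m using Nat.strong_induction_on with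
  | _ m IH =>
  intro β hβ
  classical
  -- Step 1: expand dd γ
  have step1 : ∑ γ ∈ LF (m + 1), (if PairCov β γ then dd γ else 0)
      = ∑ β' ∈ LF m, ∑ γ ∈ LF (m + 1),
          (if PairCov β γ ∧ PairCov β' γ then dd β' else 0) := by
    rw [Finset.sum_comm]
    apply Finset.sum_congr rfl
    intro γ hγ
    rw [mem_LF] at hγ
    split_ifs with hc
    · rw [dd_rec hγ]
      apply Finset.sum_congr rfl
      intro β' _
      simp [hc]
    · symm
      apply Finset.sum_eq_zero
      intro β' _
      simp [hc]
  -- Step 2: inner sum as a multiple of a cardinality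
  have step2 : ∀ β' ∈ LF m, ∑ γ ∈ LF (m + 1),
        (if PairCov β γ ∧ PairCov β' γ then dd β' else 0)
      = dd β' * {γ : YP | PairCov β γ ∧ PairCov β' γ}.ncard := by
    intro β' _
    rw [ncard_eq_filter_card (F := LF (m + 1))
      (fun γ hγ => by rw [mem_LF]; rw [hγ.1.lvl_eq, hβ])]
    rw [← Finset.sum_filter, Finset.sum_const, smul_eq_mul, mul_comm]
  -- Step 3: replace up-counts with down-counts
  have step3 : ∀ β' ∈ LF m, {γ : YP | PairCov β γ ∧ PairCov β' γ}.ncard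
      = {δ : YP | PairCov δ β ∧ PairCov δ β'}.ncard + (if β' = β then 2 else 0) := by
    intro β' hβ'
    rw [mem_LF] at hβ'
    by_cases heq : β' = β
    · subst heq
      simp only [if_pos rfl, and_self]
      exact ncard_pair_up β'
    · rw [if_neg heq, add_zero]
      exact ncard_pair_common β β' (fun h => heq h.symm) (by omega)
  -- Step 4: the down-count sum
  have step4 : ∑ β' ∈ LF m, dd β' * {δ : YP | PairCov δ β ∧ PairCov δ β'}.ncard
      = 2 * m * dd β := by
    have expand : ∀ β' ∈ LF m, dd β' * {δ : YP | PairCov δ β ∧ PairCov δ β'}.ncard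
        = ∑ δ ∈ LF (m - 1), (if PairCov δ β ∧ PairCov δ β' then dd β' else 0) := by
      intro β' _
      rw [ncard_eq_filter_card (F := LF (m - 1))
        (fun δ hδ => by rw [mem_LF]; have := hδ.1.lvl_eq; omega)]
      rw [← Finset.sum_filter, Finset.sum_const, smul_eq_mul, mul_comm]
    rw [Finset.sum_congr rfl expand, Finset.sum_comm]
    -- now : ∑ δ ∈ LF (m-1), ∑ β' ∈ LF m, if PairCov δ β ∧ PairCov δ β' then dd β' else 0
    have inner : ∀ δ ∈ LF (m - 1), ∑ β' ∈ LF m,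
          (if PairCov δ β ∧ PairCov δ β' then dd β' else 0)
        = if PairCov δ β then 2 * m * dd δ else 0 := by
      intro δ hδ
      rw [mem_LF] at hδ
      by_cases hc : PairCov δ β
      · rw [if_pos hc]
        have hm : 1 ≤ m := by have := hc.lvl_eq; omega
        have hδm : lvl δ = m - 1 := hδ
        have := IH (m - 1) (by omega) δ hδm
        rw [show m - 1 + 1 = m by omega] at this
        rw [← this]
        apply Finset.sum_congr rfl
        intro β' _
        simp [hc]
      · rw [if_neg hc]
        apply Finset.sum_eq_zero
        intro β' _
        simp [hc]
    rw [Finset.sum_congr rfl inner]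
    by_cases hm : 1 ≤ m
    · have hrec := dd_rec (γ := β) (m := m - 1) (by omega)
      calc ∑ δ ∈ LF (m - 1), (if PairCov δ β then 2 * m * dd δ else 0)
          = 2 * m * ∑ δ ∈ LF (m - 1), (if PairCov δ β then dd δ else 0) := by
            rw [Finset.mul_sum]
            apply Finset.sum_congr rfl
            intro δ _
            split_ifs <;> ring
        _ = 2 * m * dd β := by rw [← hrec]
    · have hm0 : m = 0 := by omega
      subst hm0
      simp only [Nat.mul_zero, Nat.zero_mul]
      apply Finset.sum_eq_zero
      intro δ _
      have : ¬ PairCov δ β := by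
        intro hc
        have := hc.lvl_eq
        omega
      simp [this]
  -- Put everything together
  rw [step1, Finset.sum_congr rfl step2, Finset.sum_congr rfl
    (fun β' hβ' => by rw [step3 β' hβ'])]
  have split : ∑ β' ∈ LF m, dd β' * ({δ : YP | PairCov δ β ∧ PairCov δ β'}.ncard
        + (if β' = β then 2 else 0))
      = (∑ β' ∈ LF m, dd β' * {δ : YP | PairCov δ β ∧ PairCov δ β'}.ncard)
        + ∑ β' ∈ LF m, (if β' = β then 2 * dd β' else 0) := by
    rw [← Finset.sum_add_distrib]
    apply Finset.sum_congr rfl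
    intro β' _
    split_ifs <;> ring
  rw [split, step4]
  rw [Finset.sum_ite_eq' (LF m) β (fun β' => 2 * dd β')]
  rw [if_pos (mem_LF.mpr hβ)]
  ring

lemma iter_sum (t : ℕ) : ∀ (m : ℕ) (β : YP), lvl β = m →
    2 ^ m * m.factorial * (∑ γ ∈ LF (m + t), nchains t β γ * dd γ)
      = 2 ^ (m + t) * (m + t).factorial * dd β := by
  induction t with
  | zero =>
    intro m β hβ
    rw [Nat.add_zero]
    congr 1
    have : ∀ γ ∈ LF m, nchains 0 β γ * dd γ = if β = γ then dd γ else 0 := by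
      intro γ _
      rw [nchains_zero]
      split_ifs <;> ring
    rw [Finset.sum_congr rfl this, Finset.sum_ite_eq (LF m) β dd, if_pos (mem_LF.mpr hβ)]
  | succ t ih =>
    intro m β hβ
    have key_expand : ∀ γ ∈ LF (m + (t + 1)), nchains (t + 1) β γ * dd γ
        = ∑ δ ∈ LF (m + t), (if PairCov δ γ then nchains t β δ * dd γ else 0) := by
      intro γ hγ
      rw [mem_LF] at hγ
      rw [nchains_succ, DF_eq_filter (m := m + t) (by omega), Finset.sum_filter,
        Finset.sum_mul]
      apply Finset.sum_congr rfl
      intro δ _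
      split_ifs <;> ring
    rw [Finset.sum_congr rfl key_expand, Finset.sum_comm]
    have inner : ∀ δ ∈ LF (m + t), ∑ γ ∈ LF (m + (t + 1)),
          (if PairCov δ γ then nchains t β δ * dd γ else 0)
        = nchains t β δ * (2 * (m + t + 1) * dd δ) := by
      intro δ hδ
      rw [mem_LF] at hδ
      have hkey := key_sum (m + t) δ hδ
      calc ∑ γ ∈ LF (m + (t + 1)), (if PairCov δ γ then nchains t β δ * dd γ else 0)
          = nchains t β δ * ∑ γ ∈ LF (m + t + 1), (if PairCov δ γ then dd γ else 0) := by
            rw [Finset.mul_sum]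
            apply Finset.sum_congr rfl
            intro γ _
            split_ifs <;> ring
        _ = nchains t β δ * (2 * (m + t + 1) * dd δ) := by rw [hkey]
    rw [Finset.sum_congr rfl inner]
    have fact : ∀ δ : YP, nchains t β δ * (2 * (m + t + 1) * dd δ)
        = 2 * (m + t + 1) * (nchains t β δ * dd δ) := fun δ => by ring
    rw [Finset.sum_congr rfl (fun δ _ => fact δ), ← Finset.mul_sum]
    have := ih m β hβ
    calc 2 ^ m * m.factorial * (2 * (m + t + 1) * ∑ δ ∈ LF (m + t), nchains t β δ * dd δ)
        = 2 * (m + t + 1) * (2 ^ m * m.factorial * ∑ δ ∈ LF (m + t), nchains t β δ * dd δ) := by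
          ring
      _ = 2 * (m + t + 1) * (2 ^ (m + t) * (m + t).factorial * dd β) := by rw [this]
      _ = 2 ^ (m + (t + 1)) * (m + (t + 1)).factorial * dd β := by
          rw [show m + (t + 1) = (m + t) + 1 by omega, pow_succ, Nat.factorial_succ]
          ring

/-- The quantity `S(n, i) = #Hom(ℋᵢⁿ ↑ 𝒬; 𝓑)` for the Weyl group `B_n`: the sum over tuples
`(β_{n-1}, β_{i-1}, β_{i-2}, α_i, α_{i-1})` of pairs of Young diagrams at levels
`n-1, i-1, i-2, i, i-1` with `β_{i-2} ⋖ β_{i-1}`, `β_{i-1} ⋖ α_i`, `β_{i-2} ⋖ α_{i-1}`,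
`α_{i-1} ⋖ α_i`, of `N(β_{i-1}, β_{n-1}) · d(α_{i-1}) · d(β_{n-1})`. -/
noncomputable def S (n i : ℕ) : ℕ :=
  ∑ᶠ (βn1 : YP) (βi1 : YP) (βi2 : YP) (αi : YP) (αi1 : YP)
    (_ : lvl βn1 = n - 1) (_ : lvl βi1 = i - 1) (_ : lvl βi2 = i - 2)
    (_ : lvl αi = i) (_ : lvl αi1 = i - 1)
    (_ : PairCov βi2 βi1) (_ : PairCov βi1 αi)
    (_ : PairCov βi2 αi1) (_ : PairCov αi1 αi),
    NN βi1 βn1 * dd αi1 * dd βn1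

lemma sum_support (m : ℕ) (f : YP → ℕ) (h : ∀ β, f β ≠ 0 → lvl β = m) :
    (∑ᶠ β, f β) = ∑ β ∈ LF m, f β :=
  finsum_eq_finset_sum_of_support_subset f
    (fun β hβ => Finset.mem_coe.mpr (mem_LF.mpr (h β hβ)))

lemma S_eq (n i : ℕ) :
    S n i = ∑ βn1 ∈ LF (n-1), ∑ βi1 ∈ LF (i-1), ∑ βi2 ∈ LF (i-2), ∑ αi ∈ LF i,
      ∑ αi1 ∈ LF (i-1),
      if lvl βn1 = n - 1 ∧ lvl βi1 = i - 1 ∧ lvl βi2 = i - 2 ∧ lvl αi = i ∧ lvl αi1 = i - 1 ∧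
          PairCov βi2 βi1 ∧ PairCov βi1 αi ∧ PairCov βi2 αi1 ∧ PairCov αi1 αi
        then NN βi1 βn1 * dd αi1 * dd βn1 else 0 := by
  unfold S
  simp only [finsum_eq_if, ← ite_and]
  have l5 : ∀ βn1 βi1 βi2 αi : YP, (∑ᶠ αi1 : YP,
      if lvl βn1 = n - 1 ∧ lvl βi1 = i - 1 ∧ lvl βi2 = i - 2 ∧ lvl αi = i ∧ lvl αi1 = i - 1 ∧
          PairCov βi2 βi1 ∧ PairCov βi1 αi ∧ PairCov βi2 αi1 ∧ PairCov αi1 αi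
        then NN βi1 βn1 * dd αi1 * dd βn1 else 0)
      = ∑ αi1 ∈ LF (i-1),
        if lvl βn1 = n - 1 ∧ lvl βi1 = i - 1 ∧ lvl βi2 = i - 2 ∧ lvl αi = i ∧ lvl αi1 = i - 1 ∧
            PairCov βi2 βi1 ∧ PairCov βi1 αi ∧ PairCov βi2 αi1 ∧ PairCov αi1 αi
          then NN βi1 βn1 * dd αi1 * dd βn1 else 0 := by
    intro βn1 βi1 βi2 αi
    apply sum_support
    intro αi1 h
    by_contra hlvl
    exact h (if_neg (fun hfull => hlvl hfull.2.2.2.2.1))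
  simp only [l5]
  have l4 : ∀ βn1 βi1 βi2 : YP, (∑ᶠ αi : YP, ∑ αi1 ∈ LF (i-1),
      if lvl βn1 = n - 1 ∧ lvl βi1 = i - 1 ∧ lvl βi2 = i - 2 ∧ lvl αi = i ∧ lvl αi1 = i - 1 ∧
          PairCov βi2 βi1 ∧ PairCov βi1 αi ∧ PairCov βi2 αi1 ∧ PairCov αi1 αi
        then NN βi1 βn1 * dd αi1 * dd βn1 else 0)
      = ∑ αi ∈ LF i, ∑ αi1 ∈ LF (i-1),
        if lvl βn1 = n - 1 ∧ lvl βi1 = i - 1 ∧ lvl βi2 = i - 2 ∧ lvl αi = i ∧ lvl αi1 = i - 1 ∧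
            PairCov βi2 βi1 ∧ PairCov βi1 αi ∧ PairCov βi2 αi1 ∧ PairCov αi1 αi
          then NN βi1 βn1 * dd αi1 * dd βn1 else 0 := by
    intro βn1 βi1 βi2
    apply sum_support
    intro αi h
    by_contra hlvl
    apply h
    apply Finset.sum_eq_zero
    intro αi1 _
    exact if_neg (fun hfull => hlvl hfull.2.2.2.1)
  simp only [l4]
  have l3 : ∀ βn1 βi1 : YP, (∑ᶠ βi2 : YP, ∑ αi ∈ LF i, ∑ αi1 ∈ LF (i-1),
      if lvl βn1 = n - 1 ∧ lvl βi1 = i - 1 ∧ lvl βi2 = i - 2 ∧ lvl αi = i ∧ lvl αi1 = i - 1 ∧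
          PairCov βi2 βi1 ∧ PairCov βi1 αi ∧ PairCov βi2 αi1 ∧ PairCov αi1 αi
        then NN βi1 βn1 * dd αi1 * dd βn1 else 0)
      = ∑ βi2 ∈ LF (i-2), ∑ αi ∈ LF i, ∑ αi1 ∈ LF (i-1),
        if lvl βn1 = n - 1 ∧ lvl βi1 = i - 1 ∧ lvl βi2 = i - 2 ∧ lvl αi = i ∧ lvl αi1 = i - 1 ∧
            PairCov βi2 βi1 ∧ PairCov βi1 αi ∧ PairCov βi2 αi1 ∧ PairCov αi1 αi
          then NN βi1 βn1 * dd αi1 * dd βn1 else 0 := by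
    intro βn1 βi1
    apply sum_support
    intro βi2 h
    by_contra hlvl
    apply h
    apply Finset.sum_eq_zero
    intro αi _
    apply Finset.sum_eq_zero
    intro αi1 _
    exact if_neg (fun hfull => hlvl hfull.2.2.1)
  simp only [l3]
  have l2 : ∀ βn1 : YP, (∑ᶠ βi1 : YP, ∑ βi2 ∈ LF (i-2), ∑ αi ∈ LF i, ∑ αi1 ∈ LF (i-1),
      if lvl βn1 = n - 1 ∧ lvl βi1 = i - 1 ∧ lvl βi2 = i - 2 ∧ lvl αi = i ∧ lvl αi1 = i - 1 ∧
          PairCov βi2 βi1 ∧ PairCov βi1 αi ∧ PairCov βi2 αi1 ∧ PairCov αi1 αi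
        then NN βi1 βn1 * dd αi1 * dd βn1 else 0)
      = ∑ βi1 ∈ LF (i-1), ∑ βi2 ∈ LF (i-2), ∑ αi ∈ LF i, ∑ αi1 ∈ LF (i-1),
        if lvl βn1 = n - 1 ∧ lvl βi1 = i - 1 ∧ lvl βi2 = i - 2 ∧ lvl αi = i ∧ lvl αi1 = i - 1 ∧
            PairCov βi2 βi1 ∧ PairCov βi1 αi ∧ PairCov βi2 αi1 ∧ PairCov αi1 αi
          then NN βi1 βn1 * dd αi1 * dd βn1 else 0 := by
    intro βn1
    apply sum_support
    intro βi1 h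
    by_contra hlvl
    apply h
    apply Finset.sum_eq_zero
    intro βi2 _
    apply Finset.sum_eq_zero
    intro αi _
    apply Finset.sum_eq_zero
    intro αi1 _
    exact if_neg (fun hfull => hlvl hfull.2.1)
  simp only [l2]
  apply sum_support
  intro βn1 h
  by_contra hlvl
  apply h
  apply Finset.sum_eq_zero
  intro βi1 _
  apply Finset.sum_eq_zero
  intro βi2 _
  apply Finset.sum_eq_zero
  intro αi _
  apply Finset.sum_eq_zero
  intro αi1 _
  exact if_neg (fun hfull => hlvl hfull.1)

lemma S_eq2 (n i : ℕ) :
    S n i = ∑ βi1 ∈ LF (i-1), ∑ βi2 ∈ LF (i-2), ∑ αi ∈ LF i, ∑ αi1 ∈ LF (i-1),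
      ∑ βn1 ∈ LF (n-1),
      if lvl βn1 = n - 1 ∧ lvl βi1 = i - 1 ∧ lvl βi2 = i - 2 ∧ lvl αi = i ∧ lvl αi1 = i - 1 ∧
          PairCov βi2 βi1 ∧ PairCov βi1 αi ∧ PairCov βi2 αi1 ∧ PairCov αi1 αi
        then NN βi1 βn1 * dd αi1 * dd βn1 else 0 := by
  rw [S_eq]
  rw [Finset.sum_comm]
  apply Finset.sum_congr rfl; intro βi1 _
  rw [Finset.sum_comm]
  apply Finset.sum_congr rfl; intro βi2 _
  rw [Finset.sum_comm]
  apply Finset.sum_congr rfl; intro αi _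
  rw [Finset.sum_comm]

lemma TT (n i : ℕ) (h1 : 1 ≤ i) (hin : i ≤ n) (βi1 : YP) (hl : lvl βi1 = i - 1) :
    2 ^ (i - 1) * (i - 1).factorial * ∑ βn1 ∈ LF (n - 1), NN βi1 βn1 * dd βn1
      = 2 ^ (n - 1) * (n - 1).factorial * dd βi1 := by
  have hLF : LF (n - 1) = LF ((i - 1) + (n - i)) := by congr 1; omega
  have hcong : ∀ βn1 ∈ LF ((i - 1) + (n - i)),
      NN βi1 βn1 * dd βn1 = nchains (n - i) βi1 βn1 * dd βn1 := by
    intro βn1 hβ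
    rw [mem_LF] at hβ
    unfold NN
    rw [hβ, hl, show (i - 1) + (n - i) - (i - 1) = n - i by omega]
  rw [hLF, Finset.sum_congr rfl hcong, iter_sum (n - i) (i - 1) βi1 hl,
    show (i - 1) + (n - i) = n - 1 by omega]

lemma main_red (n i : ℕ) (h1 : 1 ≤ i) (hin : i ≤ n) :
    2 ^ (i - 1) * (i - 1).factorial * S n i
      = 2 ^ (n - 1) * (n - 1).factorial *
        (∑ βi1 ∈ LF (i-1), ∑ βi2 ∈ LF (i-2), ∑ αi ∈ LF i, ∑ αi1 ∈ LF (i-1),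
          if lvl βi1 = i - 1 ∧ lvl βi2 = i - 2 ∧ lvl αi = i ∧ lvl αi1 = i - 1 ∧
              PairCov βi2 βi1 ∧ PairCov βi1 αi ∧ PairCov βi2 αi1 ∧ PairCov αi1 αi
            then dd αi1 * dd βi1 else 0) := by
  classical
  rw [S_eq2]
  simp only [Finset.mul_sum]
  apply Finset.sum_congr rfl; intro βi1 _
  apply Finset.sum_congr rfl; intro βi2 _
  apply Finset.sum_congr rfl; intro αi _
  apply Finset.sum_congr rfl; intro αi1 _
  -- key pointwise step
  have e1 : ∀ βn1 ∈ LF (n - 1),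
      2 ^ (i - 1) * (i - 1).factorial *
      (if lvl βn1 = n - 1 ∧ lvl βi1 = i - 1 ∧ lvl βi2 = i - 2 ∧ lvl αi = i ∧
          lvl αi1 = i - 1 ∧ PairCov βi2 βi1 ∧ PairCov βi1 αi ∧ PairCov βi2 αi1 ∧
          PairCov αi1 αi then NN βi1 βn1 * dd αi1 * dd βn1 else 0)
      = 2 ^ (i - 1) * (i - 1).factorial *
        (if lvl βi1 = i - 1 ∧ lvl βi2 = i - 2 ∧ lvl αi = i ∧ lvl αi1 = i - 1 ∧
          PairCov βi2 βi1 ∧ PairCov βi1 αi ∧ PairCov βi2 αi1 ∧ PairCov αi1 αi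
          then NN βi1 βn1 * dd αi1 * dd βn1 else 0) := by
    intro βn1 hβ
    rw [if_congr (and_iff_right (mem_LF.mp hβ)) rfl rfl]
  rw [Finset.sum_congr rfl e1]
  by_cases hr : lvl βi1 = i - 1 ∧ lvl βi2 = i - 2 ∧ lvl αi = i ∧ lvl αi1 = i - 1 ∧
      PairCov βi2 βi1 ∧ PairCov βi1 αi ∧ PairCov βi2 αi1 ∧ PairCov αi1 αi
  · have e2 : ∀ βn1 ∈ LF (n - 1),
        2 ^ (i - 1) * (i - 1).factorial *
        (if lvl βi1 = i - 1 ∧ lvl βi2 = i - 2 ∧ lvl αi = i ∧ lvl αi1 = i - 1 ∧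
            PairCov βi2 βi1 ∧ PairCov βi1 αi ∧ PairCov βi2 αi1 ∧ PairCov αi1 αi
          then NN βi1 βn1 * dd αi1 * dd βn1 else 0)
        = dd αi1 * (NN βi1 βn1 * dd βn1) * (2 ^ (i - 1) * (i - 1).factorial) := by
      intro βn1 _
      rw [if_pos hr]; ring
    rw [Finset.sum_congr rfl e2, ← Finset.sum_mul, if_pos hr]
    have e4 : (∑ βn1 ∈ LF (n - 1), dd αi1 * (NN βi1 βn1 * dd βn1))
        = dd αi1 * ∑ βn1 ∈ LF (n - 1), NN βi1 βn1 * dd βn1 := by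
      rw [Finset.mul_sum]
    rw [e4]
    calc dd αi1 * (∑ βn1 ∈ LF (n - 1), NN βi1 βn1 * dd βn1)
          * (2 ^ (i - 1) * (i - 1).factorial)
        = dd αi1 * (2 ^ (i - 1) * (i - 1).factorial
            * ∑ βn1 ∈ LF (n - 1), NN βi1 βn1 * dd βn1) := by ring
      _ = dd αi1 * (2 ^ (n - 1) * (n - 1).factorial * dd βi1) := by
          rw [TT n i h1 hin βi1 hr.1]
      _ = 2 ^ (n - 1) * (n - 1).factorial * (dd αi1 * dd βi1) := by ring
  · rw [if_neg hr, mul_zero]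
    apply Finset.sum_eq_zero
    intro βn1 _
    rw [if_neg hr, mul_zero]

/-- **Reduction `#Hom(ℋᵢⁿ ↑ 𝒬; 𝓑) = (|B_{n-1}| / |B_{i-1}|) · #Hom(ℋᵢⁱ ↑ 𝒬; 𝓑)`** for the
Weyl group `B_n`: `2^{i-1} (i-1)! · S(n, i) = 2^{n-1} (n-1)! · S(i, i)`, i.e.
`S(n, i) = (|B_{n-1}| / |B_{i-1}|) · S(i, i)`. -/
theorem hom_H_reduction (n i : ℕ) (h2 : 2 ≤ i) (hin : i ≤ n) :
    2 ^ (i - 1) * (i - 1).factorial * S n i = 2 ^ (n - 1) * (n - 1).factorial * S i i := by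
  have h1 : 1 ≤ i := by omega
  have hn := main_red n i h1 hin
  have hi := main_red i i h1 (le_refl i)
  have hK : 0 < 2 ^ (i - 1) * (i - 1).factorial :=
    Nat.mul_pos (Nat.pow_pos (by norm_num)) (Nat.factorial_pos _)
  have hSii : S i i = ∑ βi1 ∈ LF (i-1), ∑ βi2 ∈ LF (i-2), ∑ αi ∈ LF i, ∑ αi1 ∈ LF (i-1),
      if lvl βi1 = i - 1 ∧ lvl βi2 = i - 2 ∧ lvl αi = i ∧ lvl αi1 = i - 1 ∧
          PairCov βi2 βi1 ∧ PairCov βi1 αi ∧ PairCov βi2 αi1 ∧ PairCov αi1 αi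
        then dd αi1 * dd βi1 else 0 :=
    Nat.eq_of_mul_eq_mul_left hK hi
  rw [hn, hSii]
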